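/- For every fixed integer n ≥ 1, the empiric stochastic probabilities converge uniformly to the zero-noise empiric probabilities as the noise level tends to zero: for every ρ > 0 there exists ε₀ > 0 such that dist*(σ_{ε,n,x}, σ_{n,x}) < ρ for all 0 < ε ≤ ε₀ and all x ∈ M. -/

import Mathlib

open MeasureTheory Metric Set Filter Topology
open scoped ENNReal NNReal

namespace EmpStoch

variable {M : Type*} [MetricSpace M] [MeasurableSpace M] [BorelSpace M]

/-- The Dirac probability measure `δ_x` at a point `x`. -/
noncomputable def diracProb (x : M) : ProbabilityMeasure M :=
  ⟨MeasureTheory.Measure.dirac x, inferInstance⟩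

/-- `dstar` is a metric on the space `𝓜` of Borel probability measures which is
compatible with (i.e. metrizes) the weak* topology. -/
def MetrizesWeakStar (dstar : ProbabilityMeasure M → ProbabilityMeasure M → ℝ) : Prop :=
  (∀ μ ν, dstar μ ν = 0 ↔ μ = ν) ∧
  (∀ μ ν, dstar μ ν = dstar ν μ) ∧
  (∀ μ ν ξ, dstar μ ξ ≤ dstar μ ν + dstar ν ξ) ∧
  (∀ (μ : ProbabilityMeasure M) (s : Set (ProbabilityMeasure M)),
      s ∈ nhds μ ↔ ∃ ρ > (0 : ℝ), {ν | dstar ν μ < ρ} ⊆ s)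

/-- `P ε x` is the transition probability `p_ε(x,·)`, i.e. for every `ε > 0`, every `x`
and every Borel set `A`, `p_ε(x,A) = m(A ∩ B_ε(f x)) / m(B_ε(f x))`. -/
def IsTransitionKernel (f : M → M) (m : Measure M)
    (P : ℝ → M → ProbabilityMeasure M) : Prop :=
  ∀ ε > (0 : ℝ), ∀ (x : M) (A : Set M), MeasurableSet A →
    (P ε x : Measure M) A = m (A ∩ Metric.ball (f x) ε) / m (Metric.ball (f x) ε)

/-- `Lop ε` is the dual transfer operator `L*_ε : 𝓜 → 𝓜`, characterized by
`∫ φ d(L*_ε μ) = ∫ (∫ φ(y) p_ε(x,dy)) dμ(x)` for every continuous `φ`. -/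
def IsDualTransfer (P : ℝ → M → ProbabilityMeasure M)
    (Lop : ℝ → ProbabilityMeasure M → ProbabilityMeasure M) : Prop :=
  ∀ ε > (0 : ℝ), ∀ (μ : ProbabilityMeasure M) (φ : C(M, ℝ)),
    ∫ y, φ y ∂(Lop ε μ : Measure M) = ∫ x, (∫ y, φ y ∂(P ε x : Measure M)) ∂(μ : Measure M)

/-- `S ε n x` is the empiric stochastic probability
`σ_{ε,n,x} = (1/n) ∑_{j=1}^n (L*_ε)^j δ_x`. -/
def IsEmpiricStochastic (Lop : ℝ → ProbabilityMeasure M → ProbabilityMeasure M)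
    (S : ℝ → ℕ → M → ProbabilityMeasure M) : Prop :=
  ∀ ε > (0 : ℝ), ∀ n : ℕ, 1 ≤ n → ∀ x : M,
    (S ε n x : Measure M) =
      (n : ℝ≥0∞)⁻¹ • ∑ j ∈ Finset.range n, ((Lop ε)^[j + 1] (diracProb x) : Measure M)

/-- `S0 n x` is the zero-noise empiric probability `σ_{n,x} = (1/n) ∑_{j=1}^n δ_{f^j x}`. -/
def IsEmpiricZeroNoise (f : M → M) (S0 : ℕ → M → ProbabilityMeasure M) : Prop :=
  ∀ n : ℕ, 1 ≤ n → ∀ x : M,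
    (S0 n x : Measure M) =
      (n : ℝ≥0∞)⁻¹ • ∑ j ∈ Finset.range n, MeasureTheory.Measure.dirac (f^[j + 1] x)

/-- `pω_x`: the set of all weak* limits of convergent subsequences of `(σ_{n,x})_{n ≥ 1}`. -/
def pOmega (S0 : ℕ → M → ProbabilityMeasure M) (x : M) : Set (ProbabilityMeasure M) :=
  {ν | ∃ φ : ℕ → ℕ, StrictMono φ ∧ (∀ i, 1 ≤ φ i) ∧
    Tendsto (fun i => S0 (φ i) x) atTop (nhds ν)}

/-- The strong basin of statistical attraction `A_μ = {x : pω_x = {μ}}`. -/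
def strongBasin (S0 : ℕ → M → ProbabilityMeasure M) (μ : ProbabilityMeasure M) : Set M :=
  {x | pOmega S0 x = {μ}}

/-- The `ρ`-weak basin of statistical attraction
`A^ρ_μ = {x : dist*(pω_x, μ) < ρ}`. -/
def weakBasin (dstar : ProbabilityMeasure M → ProbabilityMeasure M → ℝ)
    (S0 : ℕ → M → ProbabilityMeasure M) (ρ : ℝ) (μ : ProbabilityMeasure M) : Set M :=
  {x | ∃ ν ∈ pOmega S0 x, dstar ν μ < ρ}

/-- The basin of empiric stochastic stability `Â_μ` of a measure `μ`. -/
def empBasin (dstar : ProbabilityMeasure M → ProbabilityMeasure M → ℝ)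
    (S : ℝ → ℕ → M → ProbabilityMeasure M) (μ : ProbabilityMeasure M) : Set M :=
  {x | ∀ ρ > (0 : ℝ), ∃ N : ℕ, ∀ n ≥ N, ∃ ε₀ > (0 : ℝ), ∀ ε : ℝ, 0 < ε → ε ≤ ε₀ →
    dstar (S ε n x) μ < ρ}

/-- `μ` is `f`-invariant: `f_* μ = μ`. -/
def IsInvariant (f : M → M) (μ : ProbabilityMeasure M) : Prop :=
  (μ : Measure M).map f = (μ : Measure M)

/-- An `f`-invariant measure `μ` is physical if its strong basin of statistical
attraction has positive `m`-measure. -/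
def Physical (f : M → M) (m : Measure M) (S0 : ℕ → M → ProbabilityMeasure M)
    (μ : ProbabilityMeasure M) : Prop :=
  IsInvariant f μ ∧ 0 < m (strongBasin S0 μ)

/-- An `f`-invariant measure `μ` is pseudo-physical if all its `ρ`-weak basins of
statistical attraction have positive `m`-measure. -/
def PseudoPhysical (f : M → M) (m : Measure M)
    (dstar : ProbabilityMeasure M → ProbabilityMeasure M → ℝ)
    (S0 : ℕ → M → ProbabilityMeasure M) (μ : ProbabilityMeasure M) : Prop :=
  IsInvariant f μ ∧ ∀ ρ > (0 : ℝ), 0 < m (weakBasin dstar S0 ρ μ)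

/-- A probability measure `μ` is empirically stochastically stable. -/
def EmpStochStable (m : Measure M)
    (dstar : ProbabilityMeasure M → ProbabilityMeasure M → ℝ)
    (S : ℝ → ℕ → M → ProbabilityMeasure M) (μ : ProbabilityMeasure M) : Prop :=
  ∃ A : Set M, MeasurableSet A ∧ 0 < m A ∧
    ∀ ρ > (0 : ℝ), ∃ N : ℕ, ∀ n ≥ N, ∃ ε₀ > (0 : ℝ), ∀ ε : ℝ, 0 < ε → ε ≤ ε₀ →
      ∀ᵐ x ∂m, x ∈ A → dstar (S ε n x) μ < ρ

/-- `μ` is globally empirically stochastically stable: it is empirically stochastically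
stable and its basin `Â_μ` has full `m`-measure. -/
def GloballyEmpStochStable (m : Measure M)
    (dstar : ProbabilityMeasure M → ProbabilityMeasure M → ℝ)
    (S : ℝ → ℕ → M → ProbabilityMeasure M) (μ : ProbabilityMeasure M) : Prop :=
  EmpStochStable m dstar S μ ∧ m (empBasin dstar S μ)ᶜ = 0

/-- `dist*(σ, K) := inf_{μ ∈ K} dist*(σ, μ)` (a minimum when `K` is compact). -/
noncomputable def dstarSet (dstar : ProbabilityMeasure M → ProbabilityMeasure M → ℝ)
    (σ : ProbabilityMeasure M) (K : Set (ProbabilityMeasure M)) : ℝ :=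
  sInf ((fun μ => dstar σ μ) '' K)

/-- The basin of empiric stochastic stability `Â_K` of a set of measures `K`. -/
noncomputable def empBasinSet (dstar : ProbabilityMeasure M → ProbabilityMeasure M → ℝ)
    (S : ℝ → ℕ → M → ProbabilityMeasure M) (K : Set (ProbabilityMeasure M)) : Set M :=
  {x | ∀ ρ > (0 : ℝ), ∃ N : ℕ, ∀ n ≥ N, ∃ ε₀ > (0 : ℝ), ∀ ε : ℝ, 0 < ε → ε ≤ ε₀ →
    dstarSet dstar (S ε n x) K < ρ}

/-- The strong basin of statistical attraction `A_K = {x : pω_x ⊆ K}` of a set `K`. -/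
def strongBasinSet (S0 : ℕ → M → ProbabilityMeasure M)
    (K : Set (ProbabilityMeasure M)) : Set M :=
  {x | pOmega S0 x ⊆ K}

/-- A nonempty weak*-compact set `K` of `f`-invariant measures is empirically
stochastically stable: (a) uniform approximation on a positive-measure set, and
(b) minimality with respect to the basins. -/
noncomputable def EmpStochStableSet (f : M → M) (m : Measure M)
    (dstar : ProbabilityMeasure M → ProbabilityMeasure M → ℝ)
    (S : ℝ → ℕ → M → ProbabilityMeasure M) (K : Set (ProbabilityMeasure M)) : Prop :=
  K.Nonempty ∧ IsCompact K ∧ (∀ μ ∈ K, IsInvariant f μ) ∧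
  (∃ A : Set M, MeasurableSet A ∧ 0 < m A ∧
    ∀ ρ > (0 : ℝ), ∃ N : ℕ, ∀ n ≥ N, ∃ ε₀ > (0 : ℝ), ∀ ε : ℝ, 0 < ε → ε ≤ ε₀ →
      ∀ x ∈ A, dstarSet dstar (S ε n x) K < ρ) ∧
  (∀ K' : Set (ProbabilityMeasure M), K'.Nonempty → IsCompact K' →
    (∀ μ ∈ K', IsInvariant f μ) →
    m (empBasinSet dstar S K \ empBasinSet dstar S K') = 0 → K ⊆ K')

/-- `K` is globally empirically stochastically stable: it is empirically stochastically
stable and its basin `Â_K` has full `m`-measure. -/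
noncomputable def GloballyEmpStochStableSet (f : M → M) (m : Measure M)
    (dstar : ProbabilityMeasure M → ProbabilityMeasure M → ℝ)
    (S : ℝ → ℕ → M → ProbabilityMeasure M) (K : Set (ProbabilityMeasure M)) : Prop :=
  EmpStochStableSet f m dstar S K ∧ m (empBasinSet dstar S K)ᶜ = 0

section AuxProofs
variable [CompactSpace M]

lemma cont_integrable {ψ : M → ℝ} (hψ : Continuous ψ) (μ : Measure M) [IsFiniteMeasure μ] :
    Integrable ψ μ :=
  hψ.integrable_of_hasCompactSupport (HasCompactSupport.of_compactSpace ψ)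

lemma cont_ball_integral (m : Measure M) [IsFiniteMeasure m]
    (hsph : ∀ (z : M) (r : ℝ), m (Metric.sphere z r) = 0)
    {g : M → ℝ} (hg : Continuous g) (ε : ℝ) :
    Continuous fun z => ∫ y, (ball z ε).indicator g y ∂m := by
  rw [continuous_iff_continuousAt]
  intro z
  have hae : ∀ᵐ a ∂m, dist a z ≠ ε := by
    rw [ae_iff]
    refine measure_mono_null ?_ (hsph z ε)
    intro a ha
    simp only [mem_setOf_eq, not_not] at ha
    simpa [Metric.mem_sphere] using ha
  refine tendsto_integral_filter_of_dominated_convergence (fun y => ‖g y‖)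
    (Eventually.of_forall fun z' => hg.aestronglyMeasurable.indicator measurableSet_ball)
    (Eventually.of_forall fun z' => Eventually.of_forall fun a => ?_)
    ((cont_integrable hg m).norm) ?_
  · exact norm_indicator_le_norm_self g a
  · filter_upwards [hae] with a ha
    rcases lt_or_gt_of_ne ha with h | h
    · have hmem : ∀ᶠ z' in 𝓝 z, a ∈ ball z' ε := by
        have : IsOpen {z' : M | dist a z' < ε} := isOpen_lt (continuous_const.dist continuous_id) continuous_const
        have hz : z ∈ {z' : M | dist a z' < ε} := h
        filter_upwards [this.mem_nhds hz] with z' hz' using mem_ball.mpr hz'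
      have : ∀ᶠ z' in 𝓝 z, (ball z' ε).indicator g a = g a := by
        filter_upwards [hmem] with z' hz' using indicator_of_mem hz' g
      rw [indicator_of_mem (mem_ball.mpr h) g]
      exact tendsto_const_nhds.congr' (by filter_upwards [this] with z' hz' using hz'.symm)
    · have hmem : ∀ᶠ z' in 𝓝 z, a ∉ ball z' ε := by
        have : IsOpen {z' : M | ε < dist a z'} := isOpen_lt continuous_const (continuous_const.dist continuous_id)
        have hz : z ∈ {z' : M | ε < dist a z'} := h
        filter_upwards [this.mem_nhds hz] with z' hz'
        simp only [mem_ball]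
        exact not_lt.mpr (le_of_lt hz')
      have : ∀ᶠ z' in 𝓝 z, (ball z' ε).indicator g a = 0 := by
        filter_upwards [hmem] with z' hz' using indicator_of_notMem hz' g
      rw [indicator_of_notMem (by simp only [mem_ball]; exact not_lt.mpr (le_of_lt h)) g]
      exact tendsto_const_nhds.congr' (by filter_upwards [this] with z' hz' using hz'.symm)

noncomputable def Tfun (m : Measure M) (ε : ℝ) (ψ : M → ℝ) : M → ℝ :=
  fun z => ((m (ball z ε)).toReal)⁻¹ * ∫ y, (ball z ε).indicator ψ y ∂m

lemma Tfun_continuous (m : Measure M) [IsFiniteMeasure m]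
    (hball : ∀ (z : M) (r : ℝ), 0 < r → 0 < m (Metric.ball z r))
    (hsph : ∀ (z : M) (r : ℝ), m (Metric.sphere z r) = 0)
    {ψ : M → ℝ} (hψ : Continuous ψ) {ε : ℝ} (hε : 0 < ε) :
    Continuous (Tfun m ε ψ) := by
  have h2 : Continuous fun z : M => (m (ball z ε)).toReal := by
    have h := cont_ball_integral m hsph (continuous_const : Continuous fun _ : M => (1:ℝ)) ε
    simpa [integral_indicator_const (1:ℝ) measurableSet_ball, Measure.real] using h
  have hne : ∀ z : M, (m (ball z ε)).toReal ≠ 0 := fun z =>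
    (ENNReal.toReal_pos (hball z ε hε).ne' (measure_ne_top m _)).ne'
  exact (h2.inv₀ hne).mul (cont_ball_integral m hsph hψ ε)

lemma integral_P {f : M → M} {m : Measure M} {P : ℝ → M → ProbabilityMeasure M}
    (hP : IsTransitionKernel f m P) {ε : ℝ} (hε : 0 < ε) (x : M) (ψ : M → ℝ) :
    ∫ y, ψ y ∂(P ε x : Measure M) = Tfun m ε ψ (f x) := by
  have hmeq : (P ε x : Measure M) = (m (ball (f x) ε))⁻¹ • m.restrict (ball (f x) ε) := by
    ext s hs
    rw [hP ε hε x s hs, Measure.smul_apply, Measure.restrict_apply hs, smul_eq_mul,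
      ENNReal.div_eq_inv_mul]
  rw [hmeq, integral_smul_measure, ENNReal.toReal_inv, ← integral_indicator measurableSet_ball,
    smul_eq_mul]
  rfl

lemma one_step {f : M → M} {m : Measure M} {P : ℝ → M → ProbabilityMeasure M}
    (hP : IsTransitionKernel f m P) {ε : ℝ} (hε : 0 < ε) {ψ : M → ℝ} (hψ : Continuous ψ)
    (x : M) {ρ' : ℝ} (hosc : ∀ y, dist y (f x) < ε → |ψ y - ψ (f x)| ≤ ρ') :
    |∫ y, ψ y ∂(P ε x : Measure M) - ψ (f x)| ≤ ρ' := by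
  have hc : (P ε x : Measure M) (ball (f x) ε)ᶜ = 0 := by
    rw [hP ε hε x _ measurableSet_ball.compl]
    simp [Set.compl_inter_self]
  have hae : ∀ᵐ y ∂(P ε x : Measure M), dist y (f x) < ε := by
    rw [ae_iff]
    refine measure_mono_null ?_ hc
    intro y hy
    simpa [mem_ball] using hy
  have h1 : ∫ y, ψ y ∂(P ε x : Measure M) - ψ (f x)
      = ∫ y, (ψ y - ψ (f x)) ∂(P ε x : Measure M) := by
    rw [integral_sub (cont_integrable hψ _) (integrable_const _), integral_const]
    simp
  rw [h1]
  have := norm_integral_le_of_norm_le_const (μ := (P ε x : Measure M)) (C := ρ')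
    (f := fun y => ψ y - ψ (f x)) (hae.mono fun y hy => by simpa [Real.norm_eq_abs] using hosc y hy)
  simpa [Real.norm_eq_abs, measure_univ] using this

lemma iter_bound {f : M → M} (hf : Continuous f) {m : Measure M} [IsFiniteMeasure m]
    (hball : ∀ (z : M) (r : ℝ), 0 < r → 0 < m (Metric.ball z r))
    (hsph : ∀ (z : M) (r : ℝ), m (Metric.sphere z r) = 0)
    {P : ℝ → M → ProbabilityMeasure M} (hP : IsTransitionKernel f m P)
    {Lop : ℝ → ProbabilityMeasure M → ProbabilityMeasure M} (hL : IsDualTransfer P Lop)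
    {ε : ℝ} (hε : 0 < ε) {ρ' : ℝ} (hρ' : 0 ≤ ρ') :
    ∀ (j : ℕ) (ψ : C(M, ℝ)),
      (∀ i < j, ∀ y z : M, dist y z < ε → |ψ (f^[i] y) - ψ (f^[i] z)| ≤ ρ') →
      ∀ μ : ProbabilityMeasure M,
        |(∫ x, ψ x ∂((Lop ε)^[j] μ : Measure M)) - ∫ x, ψ (f^[j] x) ∂(μ : Measure M)|
          ≤ j * ρ' := by
  intro j
  induction j with
  | zero => intro ψ _ μ; simp
  | succ j ih =>
    intro ψ hosc μ
    set χ : C(M, ℝ) := ψ.comp ⟨f^[j], hf.iterate j⟩ with hχdef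
    have hχ : ∀ y : M, χ y = ψ (f^[j] y) := fun y => rfl
    have h1 := ih ψ (fun i hi => hosc i (Nat.lt_succ_of_lt hi)) (Lop ε μ)
    have h2 : (∫ x, χ x ∂((Lop ε) μ : Measure M)) = ∫ x, Tfun m ε χ (f x) ∂(μ : Measure M) := by
      rw [hL ε hε μ χ]
      exact integral_congr_ae (Eventually.of_forall fun x => integral_P hP hε x χ)
    have h3 : ∀ x : M, |Tfun m ε χ (f x) - χ (f x)| ≤ ρ' := by
      intro x
      rw [← integral_P hP hε x χ]
      refine one_step hP hε χ.continuous x (fun y hy => ?_)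
      simpa [hχ] using hosc j (Nat.lt_succ_self j) y (f x) (by simpa [mem_ball] using hy)
    have hTcont : Continuous (Tfun m ε (χ : M → ℝ)) := Tfun_continuous m hball hsph χ.continuous hε
    have hint1 : Integrable (fun x => Tfun m ε (χ : M → ℝ) (f x)) (μ : Measure M) :=
      cont_integrable (hTcont.comp hf) _
    have hint2 : Integrable (fun x => χ (f x)) (μ : Measure M) :=
      cont_integrable (χ.continuous.comp hf) _
    have h4 : |(∫ x, Tfun m ε χ (f x) ∂(μ : Measure M)) - ∫ x, χ (f x) ∂(μ : Measure M)| ≤ ρ' := by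
      rw [← integral_sub hint1 hint2]
      have := norm_integral_le_of_norm_le_const (μ := (μ : Measure M)) (C := ρ')
        (f := fun x => Tfun m ε χ (f x) - χ (f x))
        (Eventually.of_forall fun x => by simpa [Real.norm_eq_abs] using h3 x)
      simpa [Real.norm_eq_abs, measure_univ] using this
    have hiter : ((Lop ε)^[j + 1] μ) = (Lop ε)^[j] (Lop ε μ) := Function.iterate_succ_apply _ _ _
    have hA : (∫ x, ψ x ∂((Lop ε)^[j+1] μ : Measure M))
        = ∫ x, ψ x ∂((Lop ε)^[j] (Lop ε μ) : Measure M) := by rw [hiter]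
    have hB : (∫ x, ψ (f^[j] x) ∂((Lop ε) μ : Measure M)) = ∫ x, χ x ∂((Lop ε) μ : Measure M) := rfl
    have hC : (∫ x, ψ (f^[j+1] x) ∂(μ : Measure M)) = ∫ x, χ (f x) ∂(μ : Measure M) := by
      refine integral_congr_ae (Eventually.of_forall fun x => ?_)
      simp only [hχ, Function.iterate_succ_apply]
    rw [hA, hC]
    have htri := abs_sub_le (∫ x, ψ x ∂((Lop ε)^[j] (Lop ε μ) : Measure M))
      (∫ x, χ x ∂((Lop ε) μ : Measure M)) (∫ x, χ (f x) ∂(μ : Measure M))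
    rw [hB, h2] at h1
    rw [h2] at htri
    push_cast
    linarith [htri, h1, h4]

lemma integral_S {Lop : ℝ → ProbabilityMeasure M → ProbabilityMeasure M}
    {S : ℝ → ℕ → M → ProbabilityMeasure M} (hS : IsEmpiricStochastic Lop S)
    {ε : ℝ} (hε : 0 < ε) {n : ℕ} (hn : 1 ≤ n) (x : M) {ψ : M → ℝ} (hψ : Continuous ψ) :
    ∫ y, ψ y ∂(S ε n x : Measure M)
      = (n : ℝ)⁻¹ * ∑ j ∈ Finset.range n,
          ∫ y, ψ y ∂((Lop ε)^[j + 1] (diracProb x) : Measure M) := by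
  rw [hS ε hε n hn x, integral_smul_measure,
    integral_finset_sum_measure (fun j _ => cont_integrable hψ _)]
  simp [ENNReal.toReal_inv, smul_eq_mul]

lemma integral_S0 {f : M → M} {S0 : ℕ → M → ProbabilityMeasure M}
    (hS0 : IsEmpiricZeroNoise f S0) {n : ℕ} (hn : 1 ≤ n) (x : M) {ψ : M → ℝ}
    (hψ : Continuous ψ) :
    ∫ y, ψ y ∂(S0 n x : Measure M)
      = (n : ℝ)⁻¹ * ∑ j ∈ Finset.range n, ψ (f^[j + 1] x) := by
  rw [hS0 n hn x, integral_smul_measure,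
    integral_finset_sum_measure (fun j _ => cont_integrable hψ _)]
  simp only [integral_dirac]
  simp [ENNReal.toReal_inv, smul_eq_mul]

lemma uniform_est {f : M → M} (hf : Continuous f) {m : Measure M} [IsFiniteMeasure m]
    (hball : ∀ (z : M) (r : ℝ), 0 < r → 0 < m (Metric.ball z r))
    (hsph : ∀ (z : M) (r : ℝ), m (Metric.sphere z r) = 0)
    {P : ℝ → M → ProbabilityMeasure M} (hP : IsTransitionKernel f m P)
    {Lop : ℝ → ProbabilityMeasure M → ProbabilityMeasure M} (hL : IsDualTransfer P Lop)
    {S : ℝ → ℕ → M → ProbabilityMeasure M} (hS : IsEmpiricStochastic Lop S)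
    {S0 : ℕ → M → ProbabilityMeasure M} (hS0 : IsEmpiricZeroNoise f S0)
    {n : ℕ} (hn : 1 ≤ n) {ψ : M → ℝ} (hψ : Continuous ψ) {η : ℝ} (hη : 0 < η) :
    ∃ ε₀ > (0 : ℝ), ∀ ε : ℝ, 0 < ε → ε ≤ ε₀ → ∀ x : M,
      |(∫ y, ψ y ∂(S ε n x : Measure M)) - ∫ y, ψ y ∂(S0 n x : Measure M)| ≤ η := by
  have hn0 : (0 : ℝ) < n := by exact_mod_cast hn
  set ρ' : ℝ := η / (n * n) with hρ'def
  have hρ' : 0 < ρ' := div_pos hη (by positivity)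
  have hδ : ∀ i : ℕ, ∃ δ > (0 : ℝ), ∀ y z : M, dist y z < δ → |ψ (f^[i] y) - ψ (f^[i] z)| ≤ ρ' := by
    intro i
    have huc : UniformContinuous fun y => ψ (f^[i] y) :=
      CompactSpace.uniformContinuous_of_continuous (hψ.comp (hf.iterate i))
    rcases Metric.uniformContinuous_iff.mp huc ρ' hρ' with ⟨δ, hδ0, hδ⟩
    exact ⟨δ, hδ0, fun y z h => le_of_lt (by simpa [Real.dist_eq] using hδ h)⟩
  choose δs hδ0 hδs using hδ
  have hne : (Finset.range n).Nonempty := ⟨0, Finset.mem_range.mpr hn⟩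
  set ε₀ := (Finset.range n).inf' hne δs with hε₀def
  have hε₀ : 0 < ε₀ := (Finset.lt_inf'_iff hne).mpr fun i _ => hδ0 i
  refine ⟨ε₀, hε₀, fun ε hε hεle x => ?_⟩
  have hterm : ∀ j ∈ Finset.range n,
      |(∫ y, ψ y ∂((Lop ε)^[j+1] (diracProb x) : Measure M)) - ψ (f^[j+1] x)| ≤ n * ρ' := by
    intro j hj
    have hjn : j + 1 ≤ n := Nat.succ_le_of_lt (Finset.mem_range.mp hj)
    have hosc : ∀ i < j + 1, ∀ y z : M, dist y z < ε → |ψ (f^[i] y) - ψ (f^[i] z)| ≤ ρ' := by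
      intro i hi y z hd
      refine hδs i y z (lt_of_lt_of_le hd (hεle.trans ?_))
      exact Finset.inf'_le δs (Finset.mem_range.mpr (lt_of_lt_of_le hi hjn))
    have h := iter_bound hf hball hsph hP hL hε (le_of_lt hρ') (j+1) ⟨ψ, hψ⟩
      (by simpa [ContinuousMap.coe_mk] using hosc) (diracProb x)
    simp only [ContinuousMap.coe_mk] at h
    have hdint : (∫ y, ψ (f^[j+1] y) ∂((diracProb x : ProbabilityMeasure M) : Measure M))
        = ψ (f^[j+1] x) := by
      rw [show ((diracProb x : ProbabilityMeasure M) : Measure M) = Measure.dirac x from rfl]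
      exact integral_dirac _ x
    rw [hdint] at h
    refine h.trans ?_
    have : ((j : ℝ) + 1) ≤ (n : ℝ) := by exact_mod_cast hjn
    have := mul_le_mul_of_nonneg_right this (le_of_lt hρ')
    push_cast
    linarith
  rw [integral_S hS hε hn x hψ, integral_S0 hS0 hn x hψ, ← mul_sub,
    ← Finset.sum_sub_distrib, abs_mul, abs_of_nonneg (by positivity : (0:ℝ) ≤ (n:ℝ)⁻¹)]
  have hsum : |∑ j ∈ Finset.range n,
      ((∫ y, ψ y ∂((Lop ε)^[j+1] (diracProb x) : Measure M)) - ψ (f^[j+1] x))|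
      ≤ n * (n * ρ') := by
    refine (Finset.abs_sum_le_sum_abs _ _).trans ?_
    have := Finset.sum_le_card_nsmul (Finset.range n) _ (n * ρ') hterm
    simpa [Finset.card_range, nsmul_eq_mul] using this
  have : (n : ℝ)⁻¹ * |∑ j ∈ Finset.range n,
      ((∫ y, ψ y ∂((Lop ε)^[j+1] (diracProb x) : Measure M)) - ψ (f^[j+1] x))|
      ≤ (n:ℝ)⁻¹ * (n * (n * ρ')) :=
    mul_le_mul_of_nonneg_left hsum (by positivity)
  refine this.trans ?_
  rw [hρ'def, show (n:ℝ)⁻¹ * ((n:ℝ) * ((n:ℝ) * (η / ((n:ℝ) * (n:ℝ))))) = η / n by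
    field_simp]
  exact div_le_self (le_of_lt hη) (by exact_mod_cast hn)

end AuxProofs

theorem statement_5 {M : Type*} [MetricSpace M] [CompactSpace M] [MeasurableSpace M]
    [BorelSpace M] (f : M → M) (hf : Continuous f)
    (m : Measure M) [IsFiniteMeasure m]
    (hball : ∀ (z : M) (r : ℝ), 0 < r → 0 < m (Metric.ball z r))
    (hsph : ∀ (z : M) (r : ℝ), m (Metric.sphere z r) = 0)
    (P : ℝ → M → ProbabilityMeasure M) (hP : IsTransitionKernel f m P)
    (Lop : ℝ → ProbabilityMeasure M → ProbabilityMeasure M) (hL : IsDualTransfer P Lop)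
    (S : ℝ → ℕ → M → ProbabilityMeasure M) (hS : IsEmpiricStochastic Lop S)
    (S0 : ℕ → M → ProbabilityMeasure M) (hS0 : IsEmpiricZeroNoise f S0)
    (dstar : ProbabilityMeasure M → ProbabilityMeasure M → ℝ) (hd : MetrizesWeakStar dstar) :
    ∀ n : ℕ, 1 ≤ n → ∀ ρ > (0 : ℝ), ∃ ε₀ > (0 : ℝ), ∀ ε : ℝ, 0 < ε → ε ≤ ε₀ →
      ∀ x : M, dstar (S ε n x) (S0 n x) < ρ := by
  intro n hn ρ hρ
  by_contra hcon
  push_neg at hcon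
  have hch : ∀ k : ℕ, ∃ ε x, 0 < ε ∧ ε ≤ 1/((k:ℝ)+1) ∧ ρ ≤ dstar (S ε n x) (S0 n x) := by
    intro k
    obtain ⟨ε, hε1, hε2, x, hx⟩ := hcon (1/((k:ℝ)+1)) (by positivity)
    exact ⟨ε, x, hε1, hε2, hx⟩
  choose εs xs hεpos hεle hge using hch
  obtain ⟨xL, -, φ, hφ, hconv⟩ := isCompact_univ.tendsto_subseq (x := xs) (fun k => mem_univ _)
  have hS0cont : ∀ (g : M → ℝ), Continuous g →
      Continuous fun y => ∫ z, g z ∂(S0 n y : Measure M) := by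
    intro g hg
    have heq : (fun y => ∫ z, g z ∂(S0 n y : Measure M))
        = fun y => (n:ℝ)⁻¹ * ∑ j ∈ Finset.range n, g (f^[j+1] y) :=
      funext fun y => integral_S0 hS0 hn y hg
    rw [heq]
    exact continuous_const.mul (continuous_finset_sum _ fun j _ => hg.comp (hf.iterate (j+1)))
  have ha : Tendsto (fun k => S0 n (xs (φ k))) atTop (𝓝 (S0 n xL)) := by
    rw [MeasureTheory.ProbabilityMeasure.tendsto_iff_forall_integral_tendsto]
    intro g
    exact ((hS0cont g g.continuous).tendsto xL).comp hconv
  have hb : Tendsto (fun k => S (εs (φ k)) n (xs (φ k))) atTop (𝓝 (S0 n xL)) := by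
    rw [MeasureTheory.ProbabilityMeasure.tendsto_iff_forall_integral_tendsto]
    intro g
    have hg2 : Tendsto (fun k => ∫ ω, g ω ∂(S0 n (xs (φ k)) : Measure M)) atTop
        (𝓝 (∫ ω, g ω ∂(S0 n xL : Measure M))) :=
      ((hS0cont g g.continuous).tendsto xL).comp hconv
    have hdiff : Tendsto (fun k => (∫ ω, g ω ∂(S (εs (φ k)) n (xs (φ k)) : Measure M))
        - ∫ ω, g ω ∂(S0 n (xs (φ k)) : Measure M)) atTop (𝓝 0) := by
      rw [NormedAddCommGroup.tendsto_nhds_zero]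
      intro η hη
      obtain ⟨ε₀, hε₀, hbound⟩ := uniform_est hf hball hsph hP hL hS hS0 hn g.continuous
        (half_pos hη)
      obtain ⟨K, hK⟩ := exists_nat_gt (1/ε₀)
      refine eventually_atTop.mpr ⟨K, fun k hk => ?_⟩
      have h1 : εs (φ k) ≤ 1/((φ k : ℝ)+1) := hεle (φ k)
      have h2 : (1:ℝ)/((φ k:ℝ)+1) ≤ ε₀ := by
        rw [div_le_iff₀ (by positivity)]
        have hkφ : (k : ℝ) ≤ (φ k : ℝ) := by exact_mod_cast hφ.le_apply
        have hKk : (K : ℝ) ≤ (k : ℝ) := by exact_mod_cast hk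
        have : 1/ε₀ < (φ k : ℝ) + 1 := by linarith
        rw [div_lt_iff₀ hε₀] at this
        linarith
      have hb2 := hbound (εs (φ k)) (hεpos _) (h1.trans h2) (xs (φ k))
      have : ‖(∫ ω, g ω ∂(S (εs (φ k)) n (xs (φ k)) : Measure M))
          - ∫ ω, g ω ∂(S0 n (xs (φ k)) : Measure M)‖ ≤ η/2 := by
        simpa [Real.norm_eq_abs] using hb2
      linarith [this, half_lt_self hη]
    have hfin := hdiff.add hg2
    rw [zero_add] at hfin
    exact hfin.congr fun k => by ring
  have hball_mem : ∀ (μ : ProbabilityMeasure M) (r : ℝ), 0 < r →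
      {ν | dstar ν μ < r} ∈ 𝓝 μ := fun μ r hr => (hd.2.2.2 μ _).mpr ⟨r, hr, subset_rfl⟩
  have e1 : ∀ᶠ k in atTop,
      dstar (S (εs (φ k)) n (xs (φ k))) (S0 n xL) < ρ/2 :=
    hb.eventually_mem (hball_mem _ _ (half_pos hρ))
  have e2 : ∀ᶠ k in atTop, dstar (S0 n (xs (φ k))) (S0 n xL) < ρ/2 :=
    ha.eventually_mem (hball_mem _ _ (half_pos hρ))
  obtain ⟨k, h1, h2⟩ := (e1.and e2).exists
  have htri := hd.2.2.1 (S (εs (φ k)) n (xs (φ k))) (S0 n xL) (S0 n (xs (φ k)))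
  have hsymm := hd.2.1 (S0 n xL) (S0 n (xs (φ k)))
  have hge' := hge (φ k)
  rw [hsymm] at htri
  linarith


end EmpStoch
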